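/- Let f be a Condorcet extension satisfying participation. Let R be a preference profile on an electorate N and let B ⊊ A be a proper subset of the alternatives such that every voter in N ranks every alternative of B below every alternative of A ∖ B (i.e., y ≻_i x for all i ∈ N, x ∈ B, y ∈ A ∖ B). Then f(R) ∉ B. -/
import Mathlib


open scoped Classical

/-- A preference profile: a nonempty electorate of voters, each voter in the
electorate having a strict linear preference order over the alternatives. -/
structure Profile (V A : Type*) where
  electorate : Finset V
  nonempty : electorate.Nonempty
  pref : ∀ i ∈ electorate, A → A → Prop
  isSTO : ∀ i (hi : i ∈ electorate), IsStrictTotalOrder A (pref i hi)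

namespace Profile

variable {V A : Type*}

/-- The profile `R - i` obtained by removing voter `i` from the electorate. -/
def erase [DecidableEq V] (R : Profile V A) (i : V)
    (h : (R.electorate.erase i).Nonempty) : Profile V A where
  electorate := R.electorate.erase i
  nonempty := h
  pref := fun j hj => R.pref j (Finset.mem_of_mem_erase hj)
  isSTO := fun j hj => R.isSTO j (Finset.mem_of_mem_erase hj)

end Profile

/-- The majority margin g_R(x,y). -/
noncomputable def margin {V A : Type*} (R : Profile V A) (x y : A) : ℤ :=
  ((R.electorate.attach.filter (fun i => R.pref i.1 i.2 x y)).card : ℤ) -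
  ((R.electorate.attach.filter (fun i => R.pref i.1 i.2 y x)).card : ℤ)

/-- `x` is a Condorcet winner of `R` if it beats every other alternative. -/
def IsCondorcetWinner {V A : Type*} (R : Profile V A) (x : A) : Prop :=
  ∀ y, y ≠ x → 0 < margin R x y

/-- A voting rule is a Condorcet extension if it selects the Condorcet winner
whenever one exists. -/
def CondorcetExtension {V A : Type*} (f : Profile V A → A) : Prop :=
  ∀ R x, IsCondorcetWinner R x → f R = x

/-- Participation: every voter weakly prefers the outcome with her vote to
the outcome without it. -/
def Participation {V A : Type*} [DecidableEq V] (f : Profile V A → A) : Prop :=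
  ∀ (R : Profile V A) (i : V) (hi : i ∈ R.electorate)
    (h : (R.electorate.erase i).Nonempty),
    f R = f (R.erase i h) ∨ R.pref i hi (f R) (f (R.erase i h))

/-- `x` is a maximin winner of `R`. -/
noncomputable def IsMaximinWinner {V A : Type*} [Fintype A] [DecidableEq A]
    (R : Profile V A) (x : A) : Prop :=
  ∀ z : A,
    (Finset.univ.erase z).inf (fun y => (margin R z y : WithTop ℤ)) ≤
    (Finset.univ.erase x).inf (fun y => (margin R x y : WithTop ℤ))

def MaximinExtension {V A : Type*} [Fintype A] [DecidableEq A]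
    (f : Profile V A → A) : Prop :=
  ∀ R, IsMaximinWinner R (f R)

/-- The Kemeny score of a ranking `K` for a profile `R`: the total pairwise
agreement of `K` with voters' preferences. -/
noncomputable def kemenyScore {V A : Type*} [Fintype A] (R : Profile V A)
    (K : A → A → Prop) : ℕ :=
  ∑ i ∈ R.electorate.attach,
    ((Finset.univ : Finset (A × A)).filter
      (fun p => K p.1 p.2 ∧ R.pref i.1 i.2 p.1 p.2)).card

/-- `x` is a Kemeny winner: it is top-ranked in some Kemeny ranking. -/
def IsKemenyWinner {V A : Type*} [Fintype A] (R : Profile V A) (x : A) : Prop :=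
  ∃ K : A → A → Prop, IsStrictTotalOrder A K ∧
    (∀ K' : A → A → Prop, IsStrictTotalOrder A K' →
      kemenyScore R K' ≤ kemenyScore R K) ∧
    (∀ y, y ≠ x → K x y)

def KemenyExtension {V A : Type*} [Fintype A] (f : Profile V A → A) : Prop :=
  ∀ R, IsKemenyWinner R (f R)

/-- A dominant set: a nonempty set whose members all beat all non-members. -/
def IsDominantSet {V A : Type*} [Fintype A] (R : Profile V A) (B : Finset A) : Prop :=
  B.Nonempty ∧ ∀ a ∈ B, ∀ b ∉ B, 0 < margin R a b

/-- `x` is in the top cycle (the minimal dominant set) of `R`. -/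
def InTopCycle {V A : Type*} [Fintype A] (R : Profile V A) (x : A) : Prop :=
  ∀ B : Finset A, IsDominantSet R B → x ∈ B

/-- Set-valued notions: maximum and minimum of a set w.r.t. a strict order. -/
def IsMaxOf {A : Type*} (r : A → A → Prop) (S : Finset A) (x : A) : Prop :=
  x ∈ S ∧ ∀ y ∈ S, y = x ∨ r x y

def IsMinOf {A : Type*} (r : A → A → Prop) (S : Finset A) (x : A) : Prop :=
  x ∈ S ∧ ∀ y ∈ S, y = x ∨ r y x

def SetCondorcetExtension {V A : Type*} [DecidableEq A]
    (F : Profile V A → Finset A) : Prop :=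
  ∀ R x, IsCondorcetWinner R x → F R = {x}

/-- Optimistic participation for set-valued rules. -/
def OptimisticParticipation {V A : Type*} [DecidableEq V]
    (F : Profile V A → Finset A) : Prop :=
  ∀ (R : Profile V A) (i : V) (hi : i ∈ R.electorate)
    (h : (R.electorate.erase i).Nonempty) (x y : A),
    IsMaxOf (R.pref i hi) (F R) x → IsMaxOf (R.pref i hi) (F (R.erase i h)) y →
    x = y ∨ R.pref i hi x y

/-- Pessimistic participation for set-valued rules. -/
def PessimisticParticipation {V A : Type*} [DecidableEq V]
    (F : Profile V A → Finset A) : Prop :=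
  ∀ (R : Profile V A) (i : V) (hi : i ∈ R.electorate)
    (h : (R.electorate.erase i).Nonempty) (x y : A),
    IsMinOf (R.pref i hi) (F R) x → IsMinOf (R.pref i hi) (F (R.erase i h)) y →
    x = y ∨ R.pref i hi x y

/-- A lottery over the alternatives. -/
structure Lottery (A : Type*) [Fintype A] where
  prob : A → ℝ
  nonneg : ∀ x, 0 ≤ prob x
  sum_one : ∑ x, prob x = 1

/-- Stochastic dominance: `p` is weakly SD-preferred to `q` w.r.t. `r`. -/
noncomputable def SDPref {A : Type*} [Fintype A] (r : A → A → Prop)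
    (p q : Lottery A) : Prop :=
  ∀ x : A,
    ∑ y ∈ Finset.univ.filter (fun y => y = x ∨ r y x), q.prob y ≤
    ∑ y ∈ Finset.univ.filter (fun y => y = x ∨ r y x), p.prob y

def ProbCondorcetExtension {V A : Type*} [Fintype A]
    (f : Profile V A → Lottery A) : Prop :=
  ∀ R x, IsCondorcetWinner R x → (f R).prob x = 1

def StrongSDParticipation {V A : Type*} [DecidableEq V] [Fintype A]
    (f : Profile V A → Lottery A) : Prop :=
  ∀ (R : Profile V A) (i : V) (hi : i ∈ R.electorate)
    (h : (R.electorate.erase i).Nonempty),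
    SDPref (R.pref i hi) (f R) (f (R.erase i h))

lemma margin_pos_of_unanimous {V A : Type*} (R : Profile V A) (x y : A)
    (hall : ∀ i (hi : i ∈ R.electorate), R.pref i hi x y) :
    0 < margin R x y := by
  unfold margin
  have h1 : (R.electorate.attach.filter fun i => R.pref i.1 i.2 x y)
      = R.electorate.attach :=
    Finset.filter_true_of_mem (fun i _ => hall i.1 i.2)
  have h2 : (R.electorate.attach.filter fun i => R.pref i.1 i.2 y x) = ∅ := by
    apply Finset.filter_false_of_mem
    intro i _ hyx
    haveI := R.isSTO i.1 i.2
    exact (asymm (hall i.1 i.2)) hyx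
  rw [h1, h2]
  simp only [Finset.card_empty, Nat.cast_zero, sub_zero, Finset.card_attach]
  exact_mod_cast Finset.card_pos.mpr R.nonempty

lemma exists_top_of_sto {A : Type*} (r : A → A → Prop) [IsTrichotomous A r]
    [IsTrans A r] (S : Finset A) (hS : S.Nonempty) :
    ∃ x ∈ S, ∀ y ∈ S, y ≠ x → r x y := by
  classical
  induction S using Finset.induction_on with
  | empty => exact absurd hS (by simp)
  | @insert a S ha ih =>
    by_cases hS' : S.Nonempty
    · obtain ⟨t, htS, htop⟩ := ih hS'
      rcases trichotomous_of r a t with hat | heq | hta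
      · refine ⟨a, Finset.mem_insert_self _ _, ?_⟩
        intro y hy hya
        rcases Finset.mem_insert.mp hy with rfl | hyS
        · exact absurd rfl hya
        · rcases eq_or_ne y t with rfl | hyt
          · exact hat
          · exact Trans.trans hat (htop y hyS hyt)
      · exact absurd heq (fun h => ha (h ▸ htS))
      · refine ⟨t, Finset.mem_insert_of_mem htS, ?_⟩
        intro y hy hyt
        rcases Finset.mem_insert.mp hy with rfl | hyS
        · exact hta
        · exact htop y hyS hyt
    · refine ⟨a, Finset.mem_insert_self _ _, ?_⟩
      intro y hy hya
      rcases Finset.mem_insert.mp hy with rfl | hyS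
      · exact absurd rfl hya
      · exact absurd ⟨y, hyS⟩ hS'

/-- If `f` is a Condorcet extension satisfying participation, `R` a
profile, and `B ⊊ A` a set of "bad" alternatives that every voter of the
electorate ranks below every alternative outside `B`, then `f(R) ∉ B`. -/
theorem stmt0_avoid_bad_alternatives {V A : Type*} [DecidableEq V] [Fintype A]
    (f : Profile V A → A) (hC : CondorcetExtension f) (hP : Participation f)
    (R : Profile V A) (B : Finset A) (hB : B ⊂ Finset.univ)
    (hbad : ∀ i (hi : i ∈ R.electorate), ∀ x ∈ B, ∀ y ∉ B, R.pref i hi y x) :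
    f R ∉ B := by
  classical
  suffices h : ∀ n (R : Profile V A), R.electorate.card = n →
      (∀ i (hi : i ∈ R.electorate), ∀ x ∈ B, ∀ y ∉ B, R.pref i hi y x) →
      f R ∉ B from h _ R rfl hbad
  intro n
  induction n using Nat.strong_induction_on with
  | _ n ih =>
    intro R hcard hbad
    obtain ⟨i, hi⟩ := R.nonempty
    by_cases h1 : R.electorate.card = 1
    · -- base case: single voter
      obtain ⟨j, hj⟩ := Finset.card_eq_one.mp h1
      have hji : ∀ k, k ∈ R.electorate → k = i := by
        intro k hk
        have hk' : k = j := by rw [hj] at hk; exact Finset.mem_singleton.mp hk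
        have hi' : i = j := by rw [hj] at hi; exact Finset.mem_singleton.mp hi
        rw [hk', hi']
      obtain ⟨c, _, hcB⟩ := Finset.exists_of_ssubset hB
      haveI := R.isSTO i hi
      obtain ⟨t, _, htop⟩ := exists_top_of_sto (R.pref i hi) Finset.univ
        ⟨c, Finset.mem_univ c⟩
      have hCW : IsCondorcetWinner R t := by
        intro y hy
        apply margin_pos_of_unanimous
        intro k hk
        cases hji k hk
        exact htop y (Finset.mem_univ y) hy
      have htB : t ∉ B := by
        intro htB
        have h1 := hbad i hi t htB c hcB
        have hct : c ≠ t := fun h => hcB (h ▸ htB)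
        exact (asymm (htop c (Finset.mem_univ c) hct)) h1
      rw [hC R t hCW]
      exact htB
    · -- inductive step
      have hn1 : 1 ≤ R.electorate.card := Finset.card_pos.mpr R.nonempty
      have h2 : (R.electorate.erase i).Nonempty := by
        rw [← Finset.card_pos, Finset.card_erase_of_mem hi]
        omega
      have hlt : (R.erase i h2).electorate.card < n := by
        simp only [Profile.erase, Finset.card_erase_of_mem hi]
        omega
      have hbad' : ∀ k (hk : k ∈ (R.erase i h2).electorate), ∀ x ∈ B, ∀ y ∉ B,
          (R.erase i h2).pref k hk y x := by
        intro k hk x hx y hy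
        exact hbad k (Finset.mem_of_mem_erase hk) x hx y hy
      have hIH : f (R.erase i h2) ∉ B := ih _ hlt _ rfl hbad'
      rcases hP R i hi h2 with heq | hpref
      · rw [heq]; exact hIH
      · intro hfB
        have hbb := hbad i hi (f R) hfB (f (R.erase i h2)) hIH
        haveI := R.isSTO i hi
        exact (asymm hpref) hbb
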